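/- The [[10,1,2]] code obtained by morphing the 15-qubit Reed-Muller code has distance exactly 2, encodes one logical qubit on 10 physical qubits, and for each of the seven nontrivial Z^b errors on the three edge qubits there is exactly one way to extend it by a single Z on one of the seven simplex qubits to form a logical Z operator. -/
import Mathlib


/-!
The `[[10,1,2]]` code obtained by morphing the 15-qubit Reed–Muller code:
7 simplex qubits labelled by nonzero `w ∈ F₂³` and 3 edge qubits `1̄,2̄,3̄`.
X-stabilizer generators (for `i ∈ Fin 3`): `X` on `{w : w_i = 1} ∪ {ī}`
(weight 5, e.g. `X₁X₂X₄X₅X_{1̄}`).  Z-stabilizer generators: for each nonempty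
`S ⊆ Fin 3` with `|S| ≤ 2`: `Z` on `{w : w_S = 1}`, plus the edge qubit `k̄`
(`{k}` the complement of `S`) when `|S| = 2` (e.g. `Z₁Z₂Z₄Z₅` and `Z₄Z₅Z_{2̄}`).
The logical X is supported on the 7 simplex qubits.
-/

abbrev Simp3 := {w : Fin 3 → ZMod 2 // w ≠ 0}

abbrev Q10 := Simp3 ⊕ Fin 3

def xCheck (i : Fin 3) : Q10 → ZMod 2
  | .inl w => if w.1 i = 1 then 1 else 0
  | .inr j => if j = i then 1 else 0

def zGen (S : Finset (Fin 3)) : Q10 → ZMod 2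
  | .inl w => if ∀ i ∈ S, w.1 i = 1 then 1 else 0
  | .inr j => if S.card = 2 ∧ j ∉ S then 1 else 0

def xMat : Matrix (Fin 3) Q10 (ZMod 2) := fun i => xCheck i

def zMat : Matrix {S : Finset (Fin 3) // S.Nonempty ∧ S.card ≤ 2} Q10 (ZMod 2) :=
  fun S => zGen S.1

def zSpan : Submodule (ZMod 2) (Q10 → ZMod 2) :=
  Submodule.span (ZMod 2) (Set.range fun S => zMat S)

def xSpan : Submodule (ZMod 2) (Q10 → ZMod 2) :=
  Submodule.span (ZMod 2) (Set.range fun i => xMat i)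

/-- Commuting with all stabilizers. -/
def inCent (a b : Q10 → ZMod 2) : Prop :=
  zMat.mulVec a = 0 ∧ xMat.mulVec b = 0

/-- Membership in the stabilizer group. -/
def inStab (a b : Q10 → ZMod 2) : Prop := a ∈ xSpan ∧ b ∈ zSpan

def wt10 (a b : Q10 → ZMod 2) : ℕ :=
  (Finset.univ.filter fun q => a q ≠ 0 ∨ b q ≠ 0).card

/-- A Z-type Pauli is a logical Z operator: it commutes with all X-stabilizers
and anticommutes with the logical X (supported on the seven simplex qubits). -/
def isLogicalZ (b : Q10 → ZMod 2) : Prop :=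
  (∀ i : Fin 3, (∑ q, xCheck i q * b q) = 0) ∧
  (∑ w : Simp3, b (.inl w)) = 1

/-- `Z^b` on the edge qubits together with a single `Z` on simplex qubit `w`. -/
def edgePlusSimplex (b : Fin 3 → ZMod 2) (w : Simp3) : Q10 → ZMod 2
  | .inl w' => if w' = w then 1 else 0
  | .inr j => b j


abbrev ZIdx := {S : Finset (Fin 3) // S.Nonempty ∧ S.card ≤ 2}

def xCol (i : Fin 3) : Q10 → ZMod 2
  | .inl _ => 0
  | .inr j => if j = i then 1 else 0

def zCol (S : ZIdx) : Q10 → ZMod 2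
  | .inl w => if S.1.card = 1 ∧ (∀ i, w.1 i = 1 ↔ i ∈ S.1) then 1 else 0
  | .inr j => if S.1.card = 2 ∧ j ∉ S.1 then 1 else 0

lemma xCol_mulVec : ∀ i, xMat.mulVec (xCol i) = Pi.single i 1 := by decide

lemma zCol_mulVec : ∀ S, zMat.mulVec (zCol S) = Pi.single S 1 := by decide

lemma surj_of_cols {m : Type*} [Fintype m] [DecidableEq m]
    (M : Matrix m Q10 (ZMod 2)) (c : m → Q10 → ZMod 2)
    (h : ∀ i, M.mulVec (c i) = Pi.single i 1) :
    Function.Surjective M.mulVecLin := by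
  intro v
  refine ⟨∑ i, v i • c i, ?_⟩
  rw [map_sum]
  simp only [map_smul, Matrix.mulVecLin_apply, h]
  funext j
  simp [Finset.sum_apply, Pi.single_apply]

lemma xrank : xMat.rank = 3 := by
  rw [Matrix.rank, LinearMap.range_eq_top.mpr (surj_of_cols _ _ xCol_mulVec),
    finrank_top, Module.finrank_fintype_fun_eq_card]
  decide

lemma zrank : zMat.rank = 6 := by
  rw [Matrix.rank, LinearMap.range_eq_top.mpr (surj_of_cols _ _ zCol_mulVec),
    finrank_top, Module.finrank_fintype_fun_eq_card]
  decide

lemma exists_one (w : Simp3) : ∃ i, w.1 i = 1 := by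
  by_contra h
  push_neg at h
  have hx : ∀ x : ZMod 2, x ≠ 1 → x = 0 := by decide
  exact w.2 (funext fun i => hx _ (h i))

lemma low_weight_zero (a b : Q10 → ZMod 2) (hc : inCent a b) (hw : wt10 a b ≤ 1) :
    a = 0 ∧ b = 0 := by
  by_contra h
  have hq0 : ∃ q0, a q0 ≠ 0 ∨ b q0 ≠ 0 := by
    by_contra h2
    push_neg at h2
    exact h ⟨funext fun q => (h2 q).1, funext fun q => (h2 q).2⟩
  obtain ⟨q0, hq0⟩ := hq0
  have hmem : q0 ∈ Finset.univ.filter fun q => a q ≠ 0 ∨ b q ≠ 0 := by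
    simp [hq0]
  have hothers : ∀ q, q ≠ q0 → a q = 0 ∧ b q = 0 := by
    intro q hq
    have hcard := Finset.card_le_one.mp hw
    by_contra h3
    have hmem' : q ∈ Finset.univ.filter fun q => a q ≠ 0 ∨ b q ≠ 0 := by
      simp only [Finset.mem_filter, Finset.mem_univ, true_and]
      tauto
    exact hq (hcard _ hmem' _ hmem)
  rcases hq0 with ha | hb
  · -- z-row contradiction
    obtain ⟨S0, hS0⟩ : ∃ S0 : ZIdx, zMat S0 q0 = 1 := by
      rcases q0 with w | j
      ·
        obtain ⟨i, hi⟩ := exists_one w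
        refine ⟨⟨{i}, ⟨i, Finset.mem_singleton_self i⟩, by simp⟩, ?_⟩
        simp [zMat, zGen, hi]
      · refine ⟨⟨Finset.univ.erase j, ?_, ?_⟩, ?_⟩
        · obtain ⟨k, hk⟩ := exists_ne j
          exact ⟨k, Finset.mem_erase.mpr ⟨hk, Finset.mem_univ k⟩⟩
        · rw [Finset.card_erase_of_mem (Finset.mem_univ j)]; decide
        · have h2 : (Finset.univ.erase j).card = 2 := by
            rw [Finset.card_erase_of_mem (Finset.mem_univ j)]; decide
          simp [zMat, zGen, h2]
    have hrow := congrFun hc.1 S0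
    rw [Matrix.mulVec, dotProduct, Finset.sum_eq_single q0
      (fun q _ hq => by rw [(hothers q hq).1, mul_zero])
      (fun hq => absurd (Finset.mem_univ q0) hq)] at hrow
    rw [hS0, one_mul] at hrow
    exact ha hrow
  · -- x-row contradiction
    obtain ⟨i0, hi0⟩ : ∃ i0 : Fin 3, xMat i0 q0 = 1 := by
      rcases q0 with w | j
      ·
        obtain ⟨i, hi⟩ := exists_one w
        exact ⟨i, by simp [xMat, xCheck, hi]⟩
      · exact ⟨j, by simp [xMat, xCheck]⟩
    have hrow := congrFun hc.2 i0
    rw [Matrix.mulVec, dotProduct, Finset.sum_eq_single q0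
      (fun q _ hq => by rw [(hothers q hq).2, mul_zero])
      (fun hq => absurd (Finset.mem_univ q0) hq)] at hrow
    rw [hi0, one_mul] at hrow
    exact hb hrow

def bEx : Q10 → ZMod 2
  | .inl w => if w.1 = (fun i => if i = 0 then 1 else 0) then 1 else 0
  | .inr j => if j = 0 then 1 else 0

def phi : (Q10 → ZMod 2) →ₗ[ZMod 2] ZMod 2 where
  toFun v := ∑ w : Simp3, v (.inl w)
  map_add' u v := by simp [Finset.sum_add_distrib]
  map_smul' c v := by simp [Finset.mul_sum]

lemma phi_zGen : ∀ S : ZIdx, phi (zMat S) = 0 := by decide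

lemma bEx_not_in_zSpan : bEx ∉ zSpan := by
  intro hb
  have hle : zSpan ≤ LinearMap.ker phi := by
    rw [zSpan, Submodule.span_le]
    rintro _ ⟨S, rfl⟩
    exact phi_zGen S
  have h0 : phi bEx = 0 := hle hb
  have h1 : phi bEx = 1 := by decide
  rw [h1] at h0
  exact one_ne_zero h0

lemma bEx_cent : inCent 0 bEx := by
  constructor
  · exact Matrix.mulVec_zero _
  · decide

lemma bEx_wt : wt10 0 bEx = 2 := by decide

instance : DecidablePred isLogicalZ := fun b => by unfold isLogicalZ; infer_instance

/-- The `[[10,1,2]]` code obtained by morphing the 15-qubit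
Reed–Muller code has 10 physical qubits, encodes one logical qubit
(its stabilizer group has rank `9 = 10 − 1`), has distance exactly 2, and for
each of the seven nontrivial `Z^b` errors on the three edge qubits there is
exactly one way to extend it by a single `Z` on one of the seven simplex qubits
to form a logical Z operator. -/
theorem ten_one_two_code_properties :
    Fintype.card Q10 = 10 ∧
    xMat.rank + zMat.rank = 9 ∧
    ((∀ a b, inCent a b → ¬ inStab a b → 2 ≤ wt10 a b) ∧
      (∃ a b, inCent a b ∧ ¬ inStab a b ∧ wt10 a b = 2)) ∧
    (∀ b : Fin 3 → ZMod 2, b ≠ 0 →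
      ∃! w : Simp3, isLogicalZ (edgePlusSimplex b w)) := by
  refine ⟨by decide, by rw [xrank, zrank], ⟨?_, 0, bEx, bEx_cent, ?_, bEx_wt⟩, ?_⟩
  · intro a b hc hs
    by_contra hlt
    push_neg at hlt
    obtain ⟨ha, hb⟩ := low_weight_zero a b hc (by omega)
    subst ha hb
    exact hs ⟨Submodule.zero_mem _, Submodule.zero_mem _⟩
  · rintro ⟨-, hb⟩
    exact bEx_not_in_zSpan hb
  · simp only [ExistsUnique]
    decide
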